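/- In T_{3m}, for any nonidentity power x^j of x, the conjugacy class of x^j is {x^j, x^{jt}, x^{jt^2}}. Consequently the conjugacy classes of T_{3m} are: {1}, k classes of size 3 contained in ⟨x⟩ \ {1}, the coset ⟨x⟩y, and the coset ⟨x⟩y^{-1}. -/

import Mathlib

/-- Relations of the presentation `T_{3m} = ⟨x, y | x^m = y^3 = 1, y⁻¹xy = x^t⟩`. -/
def T3mRels (m t : ℕ) : Set (FreeGroup (Fin 2)) :=
  {FreeGroup.of 0 ^ m, FreeGroup.of 1 ^ 3,
   (FreeGroup.of 1)⁻¹ * FreeGroup.of 0 * FreeGroup.of 1 * (FreeGroup.of 0 ^ t)⁻¹}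

/-- The group `T_{3m}` given by the presentation `⟨x, y | x^m = y^3 = 1, y⁻¹xy = x^t⟩`. -/
abbrev T3m (m t : ℕ) : Type := PresentedGroup (T3mRels m t)

/-- The generator `x` of `T_{3m}`. -/
def xg (m t : ℕ) : T3m m t := PresentedGroup.of 0

/-- The generator `y` of `T_{3m}`. -/
def yg (m t : ℕ) : T3m m t := PresentedGroup.of 1

namespace T3mAux

variable (m t : ℕ)

lemma rel_mk_one {r : FreeGroup (Fin 2)} (hr : r ∈ T3mRels m t) :
    PresentedGroup.mk (T3mRels m t) r = 1 :=
  (QuotientGroup.eq_one_iff _).2 (Subgroup.subset_normalClosure hr)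

lemma rel_x : xg m t ^ m = 1 := by
  have h := rel_mk_one m t (r := FreeGroup.of 0 ^ m) (Set.mem_insert _ _)
  rw [map_pow] at h
  exact h

lemma rel_y : yg m t ^ 3 = 1 := by
  have h := rel_mk_one m t (r := FreeGroup.of 1 ^ 3)
    (Set.mem_insert_of_mem _ (Set.mem_insert _ _))
  rw [map_pow] at h
  exact h

lemma rel_conj : (yg m t)⁻¹ * xg m t * yg m t = xg m t ^ t := by
  have h := rel_mk_one m t
    (r := (FreeGroup.of 1)⁻¹ * FreeGroup.of 0 * FreeGroup.of 1 * (FreeGroup.of 0 ^ t)⁻¹)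
    (Set.mem_insert_of_mem _ (Set.mem_insert_of_mem _ rfl))
  rw [map_mul, map_mul, map_mul, map_inv, map_inv, map_pow] at h
  rw [mul_inv_eq_one] at h
  exact h


lemma xpow_modEq {a b : ℕ} (h : a ≡ b [MOD m]) : xg m t ^ a = xg m t ^ b :=
  pow_eq_pow_iff_modEq.mpr (h.of_dvd (orderOf_dvd_of_pow_eq_one (rel_x m t)))

variable (h3 : t ^ 3 ≡ 1 [MOD m])

lemma conj1 (a : ℕ) : (yg m t)⁻¹ * xg m t ^ a * yg m t = xg m t ^ (a * t) := by
  have h : ((yg m t)⁻¹ * xg m t * ((yg m t)⁻¹)⁻¹) ^ a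
      = (yg m t)⁻¹ * xg m t ^ a * ((yg m t)⁻¹)⁻¹ := conj_pow
  rw [inv_inv] at h
  rw [← h, rel_conj, ← pow_mul, mul_comm t a]

include h3 in
lemma conj2 (a : ℕ) : yg m t * xg m t ^ a * (yg m t)⁻¹ = xg m t ^ (a * t ^ 2) := by
  have h := conj1 m t (a * t ^ 2)
  have h2 : xg m t ^ (a * t ^ 2 * t) = xg m t ^ a := by
    apply xpow_modEq
    calc a * t ^ 2 * t = a * t ^ 3 := by ring
    _ ≡ a * 1 [MOD m] := h3.mul_left a
    _ = a := mul_one a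
  rw [h2] at h
  rw [← h]
  group

include h3 in
lemma conj_ypow (e a : ℕ) :
    yg m t ^ e * xg m t ^ a * (yg m t ^ e)⁻¹ = xg m t ^ (a * t ^ (2 * e)) := by
  induction e with
  | zero => simp
  | succ e ih =>
    have : yg m t ^ (e + 1) = yg m t * yg m t ^ e := by rw [pow_succ']
    rw [this, mul_inv_rev]
    calc yg m t * yg m t ^ e * xg m t ^ a * ((yg m t ^ e)⁻¹ * (yg m t)⁻¹)
        = yg m t * (yg m t ^ e * xg m t ^ a * (yg m t ^ e)⁻¹) * (yg m t)⁻¹ := by group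
      _ = yg m t * xg m t ^ (a * t ^ (2 * e)) * (yg m t)⁻¹ := by rw [ih]
      _ = xg m t ^ (a * t ^ (2 * e) * t ^ 2) := conj2 m t h3 _
      _ = xg m t ^ (a * t ^ (2 * (e + 1))) := by
          rw [show 2 * (e + 1) = 2 * e + 2 from by ring, mul_assoc, ← pow_add]

include h3 in
lemma swap (e a : ℕ) : yg m t ^ e * xg m t ^ a = xg m t ^ (a * t ^ (2 * e)) * yg m t ^ e := by
  have h := conj_ypow m t h3 e a
  rw [← h]; group

lemma xpow_inv (hm0 : m ≠ 0) (a : ℕ) : (xg m t ^ a)⁻¹ = xg m t ^ (a * (m - 1)) := by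
  apply inv_eq_of_mul_eq_one_left
  rw [← pow_add]
  obtain ⟨n, rfl⟩ : ∃ n, m = n + 1 := ⟨m - 1, by omega⟩
  have : a * (n + 1 - 1) + a = a * (n + 1) := by
    rw [show n + 1 - 1 = n from rfl]; ring
  rw [this, pow_mul', rel_x, one_pow]

lemma ypow_inv (e : ℕ) : (yg m t ^ e)⁻¹ = yg m t ^ (2 * e) := by
  apply inv_eq_of_mul_eq_one_left
  rw [← pow_add]
  have : 2 * e + e = 3 * e := by ring
  rw [this, pow_mul, rel_y, one_pow]

include h3 in
lemma spanning (hm0 : m ≠ 0) (g : T3m m t) : ∃ i e : ℕ, g = xg m t ^ i * yg m t ^ e := by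
  let S : Subgroup (T3m m t) :=
    { carrier := {g | ∃ i e : ℕ, g = xg m t ^ i * yg m t ^ e}
      one_mem' := ⟨0, 0, by simp⟩
      mul_mem' := by
        rintro a b ⟨i, e, rfl⟩ ⟨i', e', rfl⟩
        refine ⟨i + i' * t ^ (2 * e), e + e', ?_⟩
        calc xg m t ^ i * yg m t ^ e * (xg m t ^ i' * yg m t ^ e')
            = xg m t ^ i * (yg m t ^ e * xg m t ^ i') * yg m t ^ e' := by group
          _ = xg m t ^ i * (xg m t ^ (i' * t ^ (2 * e)) * yg m t ^ e) * yg m t ^ e' := by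
              rw [swap m t h3]
          _ = xg m t ^ (i + i' * t ^ (2 * e)) * yg m t ^ (e + e') := by
              rw [pow_add, pow_add]; group
      inv_mem' := by
        rintro a ⟨i, e, rfl⟩
        refine ⟨i * (m - 1) * t ^ (2 * (2 * e)), 2 * e, ?_⟩
        rw [mul_inv_rev, ypow_inv, xpow_inv m t hm0, swap m t h3] }
  have hg : ∀ j : Fin 2, PresentedGroup.of j ∈ S := by
    intro j
    fin_cases j
    · exact ⟨1, 0, by simp [xg]⟩
    · exact ⟨0, 1, by simp [yg]⟩
  obtain ⟨i, e, hie⟩ := PresentedGroup.generated_by (T3mRels m t) S hg g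
  exact ⟨i, e, hie⟩

include h3 in
lemma conj_xy (i e a : ℕ) :
    (xg m t ^ i * yg m t ^ e) * xg m t ^ a * (xg m t ^ i * yg m t ^ e)⁻¹
      = xg m t ^ (a * t ^ (2 * e)) := by
  rw [mul_inv_rev]
  calc xg m t ^ i * yg m t ^ e * xg m t ^ a * ((yg m t ^ e)⁻¹ * (xg m t ^ i)⁻¹)
      = xg m t ^ i * (yg m t ^ e * xg m t ^ a * (yg m t ^ e)⁻¹) * (xg m t ^ i)⁻¹ := by group
    _ = xg m t ^ i * xg m t ^ (a * t ^ (2 * e)) * (xg m t ^ i)⁻¹ := by rw [conj_ypow m t h3]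
    _ = xg m t ^ (a * t ^ (2 * e)) * xg m t ^ i * (xg m t ^ i)⁻¹ := by
        rw [← pow_add, ← pow_add, add_comm]
    _ = xg m t ^ (a * t ^ (2 * e)) := by group


section Chi

variable [NeZero m]

include h3 in
lemma T3 : ((t : ZMod m)) ^ 3 = 1 := by
  have : ((t ^ 3 : ℕ) : ZMod m) = ((1 : ℕ) : ZMod m) := (ZMod.natCast_eq_natCast_iff _ _ _).mpr h3
  push_cast at this
  exact this

/-- The unit `t²` of `ZMod m`. -/
noncomputable def uT : (ZMod m)ˣ :=
  ⟨(t : ZMod m) ^ 2, (t : ZMod m), by rw [← pow_succ]; exact T3 m t h3,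
    by rw [← pow_succ']; exact T3 m t h3⟩

/-- the permutation representation -/
noncomputable def chiF : Fin 2 → Equiv.Perm (ZMod m) :=
  ![Equiv.addRight 1, Units.mulRight (uT m t h3)]

lemma addRight_pow (n : ℕ) (a : ZMod m) : ((Equiv.addRight (1 : ZMod m)) ^ n) a = a + n := by
  induction n generalizing a with
  | zero => simp
  | succ n ih =>
    rw [pow_succ', Equiv.Perm.mul_apply, ih, Equiv.coe_addRight]
    push_cast
    ring

lemma mulRight_pow {M : Type*} [Monoid M] (u : Mˣ) (n : ℕ) (a : M) :
    ((Units.mulRight u) ^ n) a = a * ((u ^ n : Mˣ) : M) := by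
  induction n generalizing a with
  | zero => simp
  | succ n ih =>
    rw [pow_succ', Equiv.Perm.mul_apply, ih]
    show a * ((u ^ n : Mˣ) : M) * (u : M) = a * ((u ^ (n + 1) : Mˣ) : M)
    rw [mul_assoc, ← Units.val_mul, ← pow_succ]

include h3 in
lemma chi_rels : ∀ r ∈ T3mRels m t, FreeGroup.lift (chiF m t h3) r = 1 := by
  intro r hr
  have hc0 : chiF m t h3 0 = Equiv.addRight 1 := rfl
  have hc1 : chiF m t h3 1 = Units.mulRight (uT m t h3) := rfl
  rcases hr with h | h | h
  · subst h
    rw [map_pow]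
    ext a
    rw [FreeGroup.lift_apply_of, hc0, addRight_pow]
    simp [ZMod.natCast_self]
  · subst h
    rw [map_pow]
    ext a
    rw [FreeGroup.lift_apply_of, hc1, mulRight_pow]
    have hu : (uT m t h3) ^ 3 = 1 := by
      ext
      rw [Units.val_pow_eq_pow_val]
      show ((t : ZMod m) ^ 2) ^ 3 = ((1 : (ZMod m)ˣ) : ZMod m)
      rw [← pow_mul, show 2 * 3 = 3 * 2 from rfl, pow_mul, T3 m t h3, one_pow, Units.val_one]
    rw [hu]
    simp
  · rw [Set.mem_singleton_iff] at h
    subst h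
    simp only [map_mul, map_inv, map_pow, FreeGroup.lift_apply_of]
    rw [mul_inv_eq_one, hc0, hc1]
    ext a
    rw [Equiv.Perm.mul_apply, Equiv.Perm.mul_apply, addRight_pow]
    show (a * ((t : ZMod m) ^ 2) + 1) * (t : ZMod m) = a + (t : ZMod m)
    rw [add_mul, one_mul, mul_assoc, ← pow_succ, T3 m t h3, mul_one]

/-- The homomorphism to permutations. -/
noncomputable def chi : T3m m t →* Equiv.Perm (ZMod m) :=
  PresentedGroup.toGroup (chi_rels m t h3)

include h3 in
lemma xpow_eq_iff (a b : ℕ) : xg m t ^ a = xg m t ^ b ↔ (a : ZMod m) = (b : ZMod m) := by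
  constructor
  · intro h
    have hx : chi m t h3 (xg m t) = Equiv.addRight 1 := by
      rw [chi, xg, PresentedGroup.toGroup.of]
      rfl
    have := congrArg (chi m t h3) h
    rw [map_pow, map_pow, hx] at this
    have h0 := congrArg (fun p : Equiv.Perm (ZMod m) => p 0) this
    simpa [addRight_pow] using h0
  · intro h
    exact xpow_modEq m t ((ZMod.natCast_eq_natCast_iff _ _ _).mp h)

end Chi


section Units

variable (h3 : t ^ 3 ≡ 1 [MOD m]) (ht1 : 1 ≤ t) (hgcd : Nat.gcd m (t - 1) = 1)

include h3 in
lemma T3' : ((t : ZMod m)) ^ 3 = 1 := by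
  have : ((t ^ 3 : ℕ) : ZMod m) = ((1 : ℕ) : ZMod m) := (ZMod.natCast_eq_natCast_iff _ _ _).mpr h3
  push_cast at this
  exact this

include h3 in
lemma unit_t : IsUnit ((t : ZMod m)) :=
  IsUnit.of_mul_eq_one ((t : ZMod m) ^ 2) (by rw [← pow_succ']; exact T3' m t h3)

include ht1 hgcd in
lemma unit_tm1 : IsUnit ((t : ZMod m) - 1) := by
  have hc : Nat.Coprime (t - 1) m := Nat.coprime_comm.mp hgcd
  have := (ZMod.unitOfCoprime (t - 1) hc).isUnit
  rwa [ZMod.coe_unitOfCoprime, Nat.cast_sub ht1, Nat.cast_one] at this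

include h3 ht1 hgcd in
lemma sum3 : (t : ZMod m) ^ 2 + (t : ZMod m) + 1 = 0 := by
  have h := T3' m t h3
  have h0 : ((t : ZMod m) - 1) * ((t : ZMod m) ^ 2 + (t : ZMod m) + 1) = 0 := by
    linear_combination h
  exact ((unit_tm1 m t ht1 hgcd).mul_right_eq_zero).mp h0

include h3 ht1 hgcd in
lemma unit_tp1 : IsUnit ((t : ZMod m) + 1) := by
  refine IsUnit.of_mul_eq_one (-(t : ZMod m)) ?_
  linear_combination -(sum3 m t h3 ht1 hgcd)

include h3 ht1 hgcd in
lemma unit_1mt2 : IsUnit (1 - (t : ZMod m) ^ 2) := by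
  have h : 1 - (t : ZMod m) ^ 2 = -((t : ZMod m) - 1) * ((t : ZMod m) + 1) := by ring
  rw [h]
  exact ((unit_tm1 m t ht1 hgcd).neg).mul (unit_tp1 m t h3 ht1 hgcd)

include ht1 hgcd in
lemma unit_1mt : IsUnit (1 - (t : ZMod m)) := by
  have h : 1 - (t : ZMod m) = -((t : ZMod m) - 1) := by ring
  rw [h]
  exact (unit_tm1 m t ht1 hgcd).neg

end Units

section Classes

variable [NeZero m] (h3 : t ^ 3 ≡ 1 [MOD m])

include h3 in
lemma tpow_mod (n : ℕ) : t ^ n ≡ t ^ (n % 3) [MOD m] := by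
  conv_lhs => rw [show n = 3 * (n / 3) + n % 3 from by omega]
  rw [pow_add, pow_mul]
  calc (t ^ 3) ^ (n / 3) * t ^ (n % 3)
      ≡ 1 ^ (n / 3) * t ^ (n % 3) [MOD m] := Nat.ModEq.mul_right _ (h3.pow _)
    _ = t ^ (n % 3) := by rw [one_pow, one_mul]

include h3 in
lemma classx (hm0 : m ≠ 0) (j : ℕ) :
    {h : T3m m t | IsConj (xg m t ^ j) h}
      = {xg m t ^ j, xg m t ^ (j * t), xg m t ^ (j * t ^ 2)} := by
  ext h
  simp only [Set.mem_setOf_eq, Set.mem_insert_iff, Set.mem_singleton_iff]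
  constructor
  · intro hc
    rw [isConj_iff] at hc
    obtain ⟨c, hc⟩ := hc
    obtain ⟨i, e, rfl⟩ := spanning m t h3 hm0 c
    rw [conj_xy m t h3] at hc
    subst hc
    have key : xg m t ^ (j * t ^ (2 * e)) = xg m t ^ (j * t ^ (2 * e % 3)) :=
      xpow_modEq m t ((tpow_mod m t h3 (2 * e)).mul_left j)
    have h2e : 2 * e % 3 = 0 ∨ 2 * e % 3 = 1 ∨ 2 * e % 3 = 2 := by omega
    rcases h2e with h2 | h2 | h2 <;> rw [h2] at key
    · left; rw [key, pow_zero, mul_one]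
    · right; left; rw [key, pow_one]
    · right; right; rw [key]
  · intro hc
    rcases hc with rfl | rfl | rfl
    · exact IsConj.refl _
    · rw [isConj_iff]
      exact ⟨(yg m t)⁻¹, by rw [inv_inv, conj1]⟩
    · rw [isConj_iff]
      refine ⟨(yg m t)⁻¹ * (yg m t)⁻¹, ?_⟩
      have hstep : (yg m t)⁻¹ * (yg m t)⁻¹ * xg m t ^ j * ((yg m t)⁻¹ * (yg m t)⁻¹)⁻¹
          = (yg m t)⁻¹ * ((yg m t)⁻¹ * xg m t ^ j * yg m t) * yg m t := by
        rw [mul_inv_rev, inv_inv]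
        simp [mul_assoc]
      rw [hstep, conj1, conj1]
      congr 1
      ring


include h3 in
lemma swap1 (a : ℕ) : yg m t * xg m t ^ a = xg m t ^ (a * t ^ 2) * yg m t := by
  have h := swap m t h3 1 a
  simpa using h

lemma swap1inv (a : ℕ) : (yg m t)⁻¹ * xg m t ^ a = xg m t ^ (a * t) * (yg m t)⁻¹ := by
  have h := conj1 m t a
  rw [← h]
  group

include h3 in
lemma conj_y_xpow (hm0 : m ≠ 0) (n : ℕ) :
    xg m t ^ n * yg m t * (xg m t ^ n)⁻¹
      = xg m t ^ (n + n * (m - 1) * t ^ 2) * yg m t := by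
  rw [xpow_inv m t hm0, mul_assoc, swap1 m t h3, ← mul_assoc, ← pow_add]

lemma conj_yinv_xpow (hm0 : m ≠ 0) (n : ℕ) :
    xg m t ^ n * (yg m t)⁻¹ * (xg m t ^ n)⁻¹
      = xg m t ^ (n + n * (m - 1) * t) * (yg m t)⁻¹ := by
  rw [xpow_inv m t hm0, mul_assoc, swap1inv m t, ← mul_assoc, ← pow_add]

include h3 in
lemma cast_exp1 (hm0 : m ≠ 0) (n c : ℕ) :
    ((n + n * (m - 1) * c : ℕ) : ZMod m) = (n : ZMod m) * (1 - (c : ZMod m)) := by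
  have hm1 : 1 ≤ m := by omega
  push_cast [Nat.cast_sub hm1]
  rw [ZMod.natCast_self]
  ring

include h3 in
lemma class_y (hm0 : m ≠ 0) (ht1 : 1 ≤ t) (hgcd : Nat.gcd m (t - 1) = 1) :
    {h : T3m m t | IsConj (yg m t) h} = {g : T3m m t | ∃ i : ℕ, g = xg m t ^ i * yg m t} := by
  ext h
  simp only [Set.mem_setOf_eq]
  constructor
  · intro hc
    rw [isConj_iff] at hc
    obtain ⟨c, hc⟩ := hc
    obtain ⟨i, e, rfl⟩ := spanning m t h3 hm0 c
    have hmid : (xg m t ^ i * yg m t ^ e) * yg m t * (xg m t ^ i * yg m t ^ e)⁻¹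
        = xg m t ^ i * yg m t * (xg m t ^ i)⁻¹ := by
      rw [mul_inv_rev]
      have hy : yg m t ^ e * yg m t * (yg m t ^ e)⁻¹ = yg m t := by group
      calc xg m t ^ i * yg m t ^ e * yg m t * ((yg m t ^ e)⁻¹ * (xg m t ^ i)⁻¹)
          = xg m t ^ i * (yg m t ^ e * yg m t * (yg m t ^ e)⁻¹) * (xg m t ^ i)⁻¹ := by
            simp [mul_assoc]
        _ = xg m t ^ i * yg m t * (xg m t ^ i)⁻¹ := by rw [hy]
    rw [hmid, conj_y_xpow m t h3 hm0] at hc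
    exact ⟨_, hc.symm⟩
  · rintro ⟨i, rfl⟩
    rw [isConj_iff]
    set w := (unit_1mt2 m t h3 ht1 hgcd).unit with hw_def
    refine ⟨xg m t ^ (((i : ZMod m) * ((w⁻¹ : (ZMod m)ˣ) : ZMod m)).val), ?_⟩
    rw [conj_y_xpow m t h3 hm0]
    congr 1
    rw [xpow_eq_iff m t h3]
    rw [cast_exp1 m t h3 hm0]
    have hn := ZMod.natCast_rightInverse ((i : ZMod m) * ((w⁻¹ : (ZMod m)ˣ) : ZMod m))
    rw [hn]
    have hw : (↑w : ZMod m) = 1 - (t : ZMod m) ^ 2 := (unit_1mt2 m t h3 ht1 hgcd).unit_spec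
    have hw2 : ((w⁻¹ : (ZMod m)ˣ) : ZMod m) * (1 - (t : ZMod m) ^ 2) = 1 := by
      rw [← hw, ← Units.val_mul, inv_mul_cancel, Units.val_one]
    push_cast
    linear_combination (i : ZMod m) * hw2

include h3 in
lemma class_yinv (hm0 : m ≠ 0) (ht1 : 1 ≤ t) (hgcd : Nat.gcd m (t - 1) = 1) :
    {h : T3m m t | IsConj (yg m t)⁻¹ h}
      = {g : T3m m t | ∃ i : ℕ, g = xg m t ^ i * (yg m t)⁻¹} := by
  ext h
  simp only [Set.mem_setOf_eq]
  constructor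
  · intro hc
    rw [isConj_iff] at hc
    obtain ⟨c, hc⟩ := hc
    obtain ⟨i, e, rfl⟩ := spanning m t h3 hm0 c
    have hmid : (xg m t ^ i * yg m t ^ e) * (yg m t)⁻¹ * (xg m t ^ i * yg m t ^ e)⁻¹
        = xg m t ^ i * (yg m t)⁻¹ * (xg m t ^ i)⁻¹ := by
      rw [mul_inv_rev]
      have hy : yg m t ^ e * (yg m t)⁻¹ * (yg m t ^ e)⁻¹ = (yg m t)⁻¹ := by group
      calc xg m t ^ i * yg m t ^ e * (yg m t)⁻¹ * ((yg m t ^ e)⁻¹ * (xg m t ^ i)⁻¹)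
          = xg m t ^ i * (yg m t ^ e * (yg m t)⁻¹ * (yg m t ^ e)⁻¹) * (xg m t ^ i)⁻¹ := by
            simp [mul_assoc]
        _ = xg m t ^ i * (yg m t)⁻¹ * (xg m t ^ i)⁻¹ := by rw [hy]
    rw [hmid, conj_yinv_xpow m t hm0] at hc
    exact ⟨_, hc.symm⟩
  · rintro ⟨i, rfl⟩
    rw [isConj_iff]
    set w := (unit_1mt m t ht1 hgcd).unit with hw_def
    refine ⟨xg m t ^ (((i : ZMod m) * ((w⁻¹ : (ZMod m)ˣ) : ZMod m)).val), ?_⟩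
    rw [conj_yinv_xpow m t hm0]
    congr 1
    rw [xpow_eq_iff m t h3]
    rw [cast_exp1 m t h3 hm0]
    have hn := ZMod.natCast_rightInverse ((i : ZMod m) * ((w⁻¹ : (ZMod m)ˣ) : ZMod m))
    rw [hn]
    have hw : (↑w : ZMod m) = 1 - (t : ZMod m) := (unit_1mt m t ht1 hgcd).unit_spec
    have hw2 : ((w⁻¹ : (ZMod m)ˣ) : ZMod m) * (1 - (t : ZMod m)) = 1 := by
      rw [← hw, ← Units.val_mul, inv_mul_cancel, Units.val_one]
    linear_combination (i : ZMod m) * hw2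

end Classes

end T3mAux

open T3mAux

/-- In `T_{3m}` (with `t ≢ 1 (mod m)`), the conjugacy class of any nonidentity power `xʲ`
is `{xʲ, x^{jt}, x^{jt²}}`; consequently the conjugacy classes are `{1}`, `k` classes of
size 3 inside `⟨x⟩ \ {1}`, the coset `⟨x⟩y`, and the coset `⟨x⟩y⁻¹`. -/
theorem T3m_conjClasses (m t k : ℕ) (ht1 : 1 ≤ t) (hm : m = 3 * k + 1)
    (ht : t ^ 3 % m = 1 % m) (hgcd : Nat.gcd m (t - 1) = 1) (htne : t % m ≠ 1 % m) :
    (∀ j : ℕ, xg m t ^ j ≠ 1 →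
      {h : T3m m t | IsConj (xg m t ^ j) h}
        = {xg m t ^ j, xg m t ^ (j * t), xg m t ^ (j * t ^ 2)}) ∧
    {h : T3m m t | IsConj (yg m t) h}
      = {g : T3m m t | ∃ i : ℕ, g = xg m t ^ i * yg m t} ∧
    {h : T3m m t | IsConj (yg m t)⁻¹ h}
      = {g : T3m m t | ∃ i : ℕ, g = xg m t ^ i * (yg m t)⁻¹} ∧
    (∀ j : ℕ, xg m t ^ j ≠ 1 →
      Nat.card ({xg m t ^ j, xg m t ^ (j * t), xg m t ^ (j * t ^ 2)} : Set (T3m m t)) = 3 ∧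
      ({xg m t ^ j, xg m t ^ (j * t), xg m t ^ (j * t ^ 2)} : Set (T3m m t))
        ⊆ (Subgroup.zpowers (xg m t) : Set (T3m m t)) \ {1}) ∧
    Nat.card {S : Set (T3m m t) | ∃ j : ℕ, xg m t ^ j ≠ 1 ∧
      S = {h : T3m m t | IsConj (xg m t ^ j) h}} = k := by
  classical
  have hm0 : m ≠ 0 := by omega
  haveI : NeZero m := ⟨hm0⟩
  have h3 : t ^ 3 ≡ 1 [MOD m] := ht
  have hXiff : ∀ a b : ℕ, xg m t ^ a = xg m t ^ b ↔ (a : ZMod m) = (b : ZMod m) :=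
    xpow_eq_iff m t h3
  have hX1 : ∀ a : ℕ, (xg m t ^ a = 1 ↔ (a : ZMod m) = 0) := by
    intro a
    have := hXiff a 0
    simpa using this
  have hut : IsUnit ((t : ZMod m)) := unit_t m t h3
  have hutm1 : IsUnit ((t : ZMod m) - 1) := unit_tm1 m t ht1 hgcd
  have hutp1 : IsUnit ((t : ZMod m) + 1) := unit_tp1 m t h3 ht1 hgcd
  have hJ : ∀ j : ℕ, xg m t ^ j ≠ 1 → ((j : ZMod m) ≠ 0) :=
    fun j hj h0 => hj ((hX1 j).mpr h0)
  -- cancellation lemmas in `ZMod m`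
  have hcanc1 : ∀ a : ZMod m, a = a * t → a = 0 := by
    intro a h
    have h0 : a * ((t : ZMod m) - 1) = 0 := by linear_combination -h
    exact (hutm1.mul_left_eq_zero).mp h0
  have hcanc2 : ∀ a : ZMod m, a = a * (t : ZMod m) ^ 2 → a = 0 := by
    intro a h
    have h0 : a * ((t : ZMod m) + 1) * ((t : ZMod m) - 1) = 0 := by linear_combination -h
    exact (hutp1.mul_left_eq_zero).mp ((hutm1.mul_left_eq_zero).mp h0)
  have hcanc3 : ∀ a : ZMod m, a * t = a * (t : ZMod m) ^ 2 → a = 0 := by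
    intro a h
    have h0 : a * (t : ZMod m) * ((t : ZMod m) - 1) = 0 := by linear_combination -h
    exact (hut.mul_left_eq_zero).mp ((hutm1.mul_left_eq_zero).mp h0)
  refine ⟨fun j _ => classx m t h3 hm0 j, class_y m t h3 hm0 ht1 hgcd,
    class_yinv m t h3 hm0 ht1 hgcd, ?_, ?_⟩
  · -- part 4
    intro j hj
    have hJ0 : ((j : ZMod m)) ≠ 0 := hJ j hj
    have hne1 : xg m t ^ j ≠ xg m t ^ (j * t) := by
      intro h
      rw [hXiff] at h
      push_cast at h
      exact hJ0 (hcanc1 _ h)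
    have hne2 : xg m t ^ j ≠ xg m t ^ (j * t ^ 2) := by
      intro h
      rw [hXiff] at h
      push_cast at h
      exact hJ0 (hcanc2 _ h)
    have hne3 : xg m t ^ (j * t) ≠ xg m t ^ (j * t ^ 2) := by
      intro h
      rw [hXiff] at h
      push_cast at h
      exact hJ0 (hcanc3 _ h)
    constructor
    · rw [Nat.card_coe_set_eq]
      have hnm : xg m t ^ j ∉ ({xg m t ^ (j * t), xg m t ^ (j * t ^ 2)} : Set (T3m m t)) := by
        simp only [Set.mem_insert_iff, Set.mem_singleton_iff]
        push_neg
        exact ⟨hne1, hne2⟩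
      rw [Set.ncard_insert_of_notMem hnm ((Set.finite_singleton _).insert _),
        Set.ncard_pair hne3]
    · intro g hg
      simp only [Set.mem_insert_iff, Set.mem_singleton_iff] at hg
      have hmem : ∀ n : ℕ, ((n : ZMod m) ≠ 0) →
          (xg m t ^ n ∈ (Subgroup.zpowers (xg m t) : Set (T3m m t)) \ {1}) := by
        intro n hn
        refine ⟨Subgroup.npow_mem_zpowers _ _, ?_⟩
        simp only [Set.mem_singleton_iff]
        intro h1
        exact hn ((hX1 n).mp h1)
      rcases hg with rfl | rfl | rfl
      · exact hmem j hJ0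
      · refine hmem (j * t) ?_
        intro h0
        push_cast at h0
        exact hJ0 ((hut.mul_left_eq_zero).mp h0)
      · refine hmem (j * t ^ 2) ?_
        intro h0
        push_cast at h0
        have : IsUnit ((t : ZMod m) ^ 2) := hut.pow 2
        exact hJ0 ((this.mul_left_eq_zero).mp h0)
  · -- part 5 : counting
    set Φ : ZMod m → Set (T3m m t) := fun a => {h | IsConj (xg m t ^ a.val) h} with hΦ
    have hvalcast : ∀ a : ZMod m, ((a.val : ℕ) : ZMod m) = a :=
      fun a => ZMod.natCast_rightInverse a
    have hΦcast : ∀ j : ℕ, Φ ((j : ZMod m)) = {h : T3m m t | IsConj (xg m t ^ j) h} := by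
      intro j
      have hx : xg m t ^ (((j : ZMod m)).val) = xg m t ^ j := by
        rw [hXiff, hvalcast]
      rw [hΦ]
      simp only
      rw [hx]
    have hSeq : {S : Set (T3m m t) | ∃ j : ℕ, xg m t ^ j ≠ 1 ∧
        S = {h : T3m m t | IsConj (xg m t ^ j) h}} = Φ '' {a : ZMod m | a ≠ 0} := by
      ext S
      simp only [Set.mem_setOf_eq, Set.mem_image]
      constructor
      · rintro ⟨j, hj, rfl⟩
        exact ⟨(j : ZMod m), hJ j hj, hΦcast j⟩
      · rintro ⟨a, ha, rfl⟩
        refine ⟨a.val, ?_, rfl⟩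
        intro h1
        exact ha (by rw [← hvalcast a]; exact (hX1 _).mp h1)
    let s : Finset (ZMod m) := Finset.univ.erase 0
    have hs : ∀ {a : ZMod m}, a ∈ s ↔ a ≠ 0 := by
      intro a
      simp [s]
    have hcoe : {a : ZMod m | a ≠ 0} = (↑s : Set (ZMod m)) := by
      ext a
      simp [s]
    rw [hSeq, hcoe, ← Finset.coe_image, Nat.card_coe_set_eq, Set.ncard_coe_finset]
    -- class equality as orbit equality
    have horb : ∀ a b : ZMod m, (Φ b = Φ a ↔ IsConj (xg m t ^ a.val) (xg m t ^ b.val)) := by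
      intro a b
      constructor
      · intro h
        have hb : xg m t ^ b.val ∈ Φ b := IsConj.refl _
        rw [h] at hb
        exact hb
      · intro h
        ext g
        simp only [hΦ, Set.mem_setOf_eq]
        exact ⟨fun hc => h.trans hc, fun hc => h.symm.trans hc⟩
    have hcast2 : ∀ a : ZMod m, ((a * (t : ZMod m)).val : ZMod m) = ((a.val * t : ℕ) : ZMod m) := by
      intro a
      rw [hvalcast]
      push_cast [hvalcast]
      ring
    have hcast3 : ∀ a : ZMod m,
        ((a * (t : ZMod m) ^ 2).val : ZMod m) = ((a.val * t ^ 2 : ℕ) : ZMod m) := by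
      intro a
      rw [hvalcast]
      push_cast [hvalcast]
      ring
    have htriple : ∀ a b : ZMod m, a ≠ 0 →
        (Φ b = Φ a ↔ (b = a ∨ b = a * t ∨ b = a * (t : ZMod m) ^ 2)) := by
      intro a b ha0
      rw [horb]
      have hclass := classx m t h3 hm0 (a.val)
      constructor
      · intro h
        have hb : xg m t ^ b.val ∈ {h : T3m m t | IsConj (xg m t ^ a.val) h} := h
        rw [hclass] at hb
        simp only [Set.mem_insert_iff, Set.mem_singleton_iff] at hb
        rcases hb with h' | h' | h'
        · left
          rw [hXiff] at h'
          rw [← hvalcast b, ← hvalcast a, h']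
        · right; left
          rw [hXiff] at h'
          rw [← hvalcast b, h']
          push_cast [hvalcast]
          ring
        · right; right
          rw [hXiff] at h'
          rw [← hvalcast b, h']
          push_cast [hvalcast]
          ring
      · intro hb
        have hmemtriple : ∀ c : ℕ, xg m t ^ c ∈
            ({xg m t ^ a.val, xg m t ^ (a.val * t), xg m t ^ (a.val * t ^ 2)} : Set (T3m m t)) →
            IsConj (xg m t ^ a.val) (xg m t ^ c) := by
          intro c hc
          rw [← hclass] at hc
          exact hc
        rcases hb with rfl | rfl | rfl
        · exact IsConj.refl _
        · refine hmemtriple _ ?_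
          have : xg m t ^ ((a * (t : ZMod m)).val) = xg m t ^ (a.val * t) := by
            rw [hXiff, hcast2]
          rw [this]
          right; left; rfl
        · refine hmemtriple _ ?_
          have : xg m t ^ ((a * (t : ZMod m) ^ 2).val) = xg m t ^ (a.val * t ^ 2) := by
            rw [hXiff, hcast3]
          rw [this]
          right; right; rfl
    -- fibers have cardinality 3
    have hFC : ∀ a ∈ s, (s.filter (fun b => Φ b = Φ a)).card = 3 := by
      intro a ha
      have ha0 : a ≠ 0 := hs.mp ha
      have hne1 : a ≠ a * t := fun h => ha0 (hcanc1 a h)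
      have hne2 : a ≠ a * (t : ZMod m) ^ 2 := fun h => ha0 (hcanc2 a h)
      have hne3 : a * (t : ZMod m) ≠ a * (t : ZMod m) ^ 2 := fun h => ha0 (hcanc3 a h)
      have hfil : s.filter (fun b => Φ b = Φ a)
          = ({a, a * t, a * (t : ZMod m) ^ 2} : Finset (ZMod m)) := by
        ext b
        rw [Finset.mem_filter]
        simp only [Finset.mem_insert, Finset.mem_singleton]
        constructor
        · rintro ⟨_, hfb⟩
          exact (htriple a b ha0).mp hfb
        · intro hb
          refine ⟨?_, (htriple a b ha0).mpr hb⟩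
          rw [hs]
          rcases hb with rfl | rfl | rfl
          · exact ha0
          · exact fun h => ha0 ((hut.mul_left_eq_zero).mp h)
          · exact fun h => ha0 (((hut.pow 2).mul_left_eq_zero).mp h)
      rw [hfil]
      rw [Finset.card_insert_of_notMem (by
        simp only [Finset.mem_insert, Finset.mem_singleton]
        push_neg
        exact ⟨hne1, hne2⟩)]
      rw [Finset.card_insert_of_notMem (by
        simp only [Finset.mem_singleton]
        exact hne3)]
      rw [Finset.card_singleton]
    have hcard := Finset.card_eq_sum_card_fiberwise
      (f := Φ) (s := s) (t := s.image Φ) (fun x hx => Finset.mem_image_of_mem _ hx)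
    have hsum : ∑ b ∈ s.image Φ, (s.filter (fun a => Φ a = b)).card
        = (s.image Φ).card * 3 := by
      calc ∑ b ∈ s.image Φ, (s.filter (fun a => Φ a = b)).card
          = ∑ _b ∈ s.image Φ, 3 := by
            refine Finset.sum_congr rfl ?_
            intro b hb
            obtain ⟨a, ha, rfl⟩ := Finset.mem_image.mp hb
            exact hFC a ha
        _ = (s.image Φ).card * 3 := by rw [Finset.sum_const, smul_eq_mul]
    have hscard : s.card = m - 1 := by
      rw [Finset.card_erase_of_mem (Finset.mem_univ _), Finset.card_univ, ZMod.card]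
    rw [hscard, hsum] at hcard
    omega
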